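/- Suppose the dynamical system (X,T,μ) satisfies the exponential concentration inequality with constant C > 0. Let f : X → ℝ be Lipschitz with ∫ f dμ = 0, and set a_f = Lip(f)·‖f‖_∞. Then for every k ≥ 0, every n ≥ 1, and every t > 0, μ({x : |CÔV_n(k)(x) − Cov(k)| > t}) ≤ 2 exp(−(t² / (16 C a_f²)) · (n² / (n + k))). -/

import Mathlib

open MeasureTheory Real

noncomputable section

/-- `K` is separately Lipschitz in each of its `n` variables, with
`L j` a Lipschitz constant for the `j`-th variable. -/
def SepLip {E : Type*} [PseudoMetricSpace E] {n : ℕ}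
    (K : (Fin n → E) → ℝ) (L : Fin n → ℝ) : Prop :=
  ∀ (x : Fin n → E) (j : Fin n) (y : E),
    |K x - K (Function.update x j y)| ≤ L j * dist (x j) y

lemma markov_exp {α : Type*} [MeasurableSpace α] (μ : Measure α) [IsProbabilityMeasure μ]
    (G : α → ℝ) (hG : Measurable G) (hGi : Integrable (fun x => Real.exp (G x)) μ) (t : ℝ) :
    (μ {x | t < G x}).toReal * Real.exp t ≤ ∫ x, Real.exp (G x) ∂μ := by
  have hs : MeasurableSet {x | t < G x} := measurableSet_lt measurable_const hG
  calc (μ {x | t < G x}).toReal * Real.exp t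
      = ∫ _ in {x | t < G x}, Real.exp t ∂μ := by rw [setIntegral_const, smul_eq_mul]; rfl
    _ ≤ ∫ x in {x | t < G x}, Real.exp (G x) ∂μ :=
        setIntegral_mono_on (integrable_const _).integrableOn hGi.integrableOn hs
          (fun x hx => Real.exp_le_exp.2 (le_of_lt hx))
    _ ≤ ∫ x, Real.exp (G x) ∂μ := setIntegral_le_integral hGi
        (Filter.Eventually.of_forall fun x => (Real.exp_pos _).le)

lemma sum_ite_inj_le_one {n : ℕ} {κ : Type*} [DecidableEq κ]
    (e : Fin n → κ) (he : Function.Injective e) (j : κ) :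
    ∑ i : Fin n, (if e i = j then (1:ℝ) else 0) ≤ 1 := by
  classical
  rw [Finset.sum_boole]
  have : (Finset.univ.filter (fun i => e i = j)).card ≤ 1 := by
    apply Finset.card_le_one.2
    intro a ha b hb
    simp only [Finset.mem_filter] at ha hb
    exact he (ha.2.trans hb.2.symm)
  exact_mod_cast this

lemma abs_min_sub_min_le (c a b : ℝ) : |min c a - min c b| ≤ |a - b| := by
  rcases le_total a c with h1 | h1 <;> rcases le_total b c with h2 | h2
  · rw [min_eq_right h1, min_eq_right h2]
  · rw [min_eq_right h1, min_eq_left h2, abs_sub_comm, abs_of_nonneg (by linarith),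
      abs_sub_comm, abs_of_nonneg (by linarith)]; linarith
  · rw [min_eq_left h1, min_eq_right h2, abs_of_nonneg (by linarith),
      abs_of_nonneg (by linarith)]; linarith
  · simp [min_eq_left h1, min_eq_left h2, abs_nonneg]

lemma abs_max_sub_max_le' (c a b : ℝ) : |max c a - max c b| ≤ |a - b| := by
  rw [max_comm c a, max_comm c b]; exact abs_max_sub_max_le_abs a b c

lemma integral_iterate' {α : Type*} [MeasurableSpace α] (μ : Measure α) (T : α → α)
    (hT : Measurable T) (hinv : μ.map T = μ) (h : α → ℝ) (hm : Measurable h) (i : ℕ) :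
    ∫ z, h (T^[i] z) ∂μ = ∫ z, h z ∂μ := by
  induction i with
  | zero => simp
  | succ i ih =>
    have hmm : AEStronglyMeasurable (fun w => h (T^[i] w)) (μ.map T) := by
      rw [hinv]; exact (hm.comp (hT.iterate i)).aestronglyMeasurable
    calc ∫ z, h (T^[i+1] z) ∂μ = ∫ z, (fun w => h (T^[i] w)) (T z) ∂μ := by
          simp only [Function.iterate_succ_apply]
      _ = ∫ w, h (T^[i] w) ∂(μ.map T) := (integral_map hT.aemeasurable hmm).symm
      _ = ∫ w, h (T^[i] w) ∂μ := by rw [hinv]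
      _ = ∫ z, h z ∂μ := ih
theorem autocovariance_deviation_exponential {d : ℕ}
    (X : Set (EuclideanSpace ℝ (Fin d))) (hX : IsCompact X)
    (T : EuclideanSpace ℝ (Fin d) → EuclideanSpace ℝ (Fin d))
    (hT : Measurable T) (hTX : Set.MapsTo T X X)
    (μ : Measure (EuclideanSpace ℝ (Fin d))) [IsProbabilityMeasure μ]
    (hμX : μ X = 1) (hinv : μ.map T = μ)
    (C : ℝ) (hC : 0 < C)
    (hconc : ∀ (n : ℕ), 1 ≤ n → ∀ (K : (Fin n → EuclideanSpace ℝ (Fin d)) → ℝ)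
      (L : Fin n → ℝ), SepLip K L →
      ∫ x, Real.exp (K (fun i => T^[(i : ℕ)] x)
          - ∫ z, K (fun i => T^[(i : ℕ)] z) ∂μ) ∂μ
        ≤ Real.exp (C * ∑ j, L j ^ 2))
    (f : EuclideanSpace ℝ (Fin d) → ℝ) (hf : Measurable f)
    (Lf Mf : ℝ) (hLf : 0 ≤ Lf) (hMf : 0 ≤ Mf)
    (hfLip : ∀ x ∈ X, ∀ y ∈ X, |f x - f y| ≤ Lf * dist x y)
    (hfBdd : ∀ x ∈ X, |f x| ≤ Mf)
    (hf0 : ∫ x, f x ∂μ = 0) :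
    ∀ (k : ℕ) (n : ℕ), 1 ≤ n → ∀ t : ℝ, 0 < t →
      (μ {x | t < |(1 / (n : ℝ)) * ∑ i ∈ Finset.range n,
            f (T^[i] x) * f (T^[i + k] x)
          - ∫ z, f z * f (T^[k] z) ∂μ|}).toReal
        ≤ 2 * Real.exp (-(t ^ 2 / (16 * C * (Lf * Mf) ^ 2))
            * ((n : ℝ) ^ 2 / ((n : ℝ) + (k : ℝ)))) := by
  intro k n hn t ht
  -- degenerate case
  rcases eq_or_lt_of_le (mul_nonneg hLf hMf) with ha | ha
  · have h1 : (μ {x | t < |(1 / (n : ℝ)) * ∑ i ∈ Finset.range n,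
        f (T^[i] x) * f (T^[i + k] x) - ∫ z, f z * f (T^[k] z) ∂μ|}).toReal ≤ 1 := by
      calc (μ _).toReal ≤ (1 : ENNReal).toReal :=
            ENNReal.toReal_mono ENNReal.one_ne_top prob_le_one
        _ = 1 := by simp
    have h2 : 2 * Real.exp (-(t ^ 2 / (16 * C * (Lf * Mf) ^ 2))
        * ((n : ℝ) ^ 2 / ((n : ℝ) + (k : ℝ)))) = 2 := by
      rw [← ha]; norm_num
    rw [h2]; linarith
  -- main case
  have hnpos : (0:ℝ) < (n:ℝ) := by exact_mod_cast hn
  have hnm : n ≤ n + k := Nat.le_add_right n k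
  have hmpos : (0:ℝ) < ((n:ℝ) + (k:ℝ)) := by positivity
  -- Lipschitz bounded extension g of f
  obtain ⟨g, hgmeas, hgX, hglip, hgbdd⟩ :
      ∃ g : EuclideanSpace ℝ (Fin d) → ℝ, Measurable g ∧ (∀ x ∈ X, g x = f x) ∧
        (∀ x y, |g x - g y| ≤ Lf * dist x y) ∧ (∀ x, |g x| ≤ Mf) := by
    have hlipOn : LipschitzOnWith Lf.toNNReal f X := by
      rw [lipschitzOnWith_iff_dist_le_mul]
      intro x hx y hy
      rw [Real.dist_eq, Real.coe_toNNReal _ hLf]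
      exact hfLip x hx y hy
    obtain ⟨g₀, hg₀lip, hg₀eq⟩ := hlipOn.extend_real
    refine ⟨fun x => max (-Mf) (min Mf (g₀ x)), ?_, ?_, ?_, ?_⟩
    · exact (continuous_const.max (continuous_const.min hg₀lip.continuous)).measurable
    · intro x hx
      have h1 : g₀ x = f x := (hg₀eq hx).symm
      have h2 := hfBdd x hx
      rw [abs_le] at h2
      simp only [h1]
      rw [min_eq_right h2.2, max_eq_right h2.1]
    · intro x y
      have h0 : |g₀ x - g₀ y| ≤ Lf * dist x y := by
        have := hg₀lip.dist_le_mul x y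
        rwa [Real.dist_eq, Real.coe_toNNReal _ hLf] at this
      calc |max (-Mf) (min Mf (g₀ x)) - max (-Mf) (min Mf (g₀ y))|
          ≤ |min Mf (g₀ x) - min Mf (g₀ y)| := abs_max_sub_max_le' _ _ _
        _ ≤ |g₀ x - g₀ y| := abs_min_sub_min_le _ _ _
        _ ≤ Lf * dist x y := h0
    · intro x
      rw [abs_le]
      exact ⟨le_max_left _ _, max_le (by linarith) (min_le_left _ _)⟩
  set a : ℝ := Lf * Mf with hadef
  -- the function G
  set G : EuclideanSpace ℝ (Fin d) → ℝ :=
    fun x => (1/(n:ℝ)) * ∑ i ∈ Finset.range n, g (T^[i] x) * g (T^[i+k] x) with hGdef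
  have hGmeas : Measurable G := by
    apply Measurable.const_mul
    apply Finset.measurable_sum
    intro i _
    exact (hgmeas.comp (hT.iterate i)).mul (hgmeas.comp (hT.iterate (i+k)))
  have hGbdd : ∀ x, |G x| ≤ Mf^2 := by
    intro x
    rw [hGdef]
    simp only []
    rw [abs_mul, abs_of_nonneg (by positivity : (0:ℝ) ≤ 1/(n:ℝ))]
    have h1 : |∑ i ∈ Finset.range n, g (T^[i] x) * g (T^[i+k] x)| ≤ (n:ℝ) * Mf^2 := by
      calc |∑ i ∈ Finset.range n, g (T^[i] x) * g (T^[i+k] x)|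
          ≤ ∑ i ∈ Finset.range n, |g (T^[i] x) * g (T^[i+k] x)| :=
            Finset.abs_sum_le_sum_abs _ _
        _ ≤ ∑ _i ∈ Finset.range n, Mf^2 := by
            apply Finset.sum_le_sum
            intro i _
            rw [abs_mul, sq]
            exact mul_le_mul (hgbdd _) (hgbdd _) (abs_nonneg _) hMf
        _ = (n:ℝ) * Mf^2 := by rw [Finset.sum_const, Finset.card_range, nsmul_eq_mul]
    calc (1/(n:ℝ)) * |∑ i ∈ Finset.range n, g (T^[i] x) * g (T^[i+k] x)|
        ≤ (1/(n:ℝ)) * ((n:ℝ) * Mf^2) := by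
          apply mul_le_mul_of_nonneg_left h1 (by positivity)
      _ = Mf^2 := by field_simp
  -- the kernel K
  set K : (Fin (n+k) → EuclideanSpace ℝ (Fin d)) → ℝ :=
    fun x => (1/(n:ℝ)) * ∑ i : Fin n,
      g (x ⟨(i:ℕ), by omega⟩) * g (x ⟨(i:ℕ)+k, by omega⟩) with hKdef
  have hKG : ∀ x, K (fun i => T^[(i:ℕ)] x) = G x := by
    intro x
    rw [hKdef, hGdef]
    simp only []
    congr 1
    rw [← Fin.sum_univ_eq_sum_range (fun i => g (T^[i] x) * g (T^[i+k] x)) n]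
  have hsep : SepLip K (fun _ => 2 * a / (n:ℝ)) := by
    intro x j y
    set x' := Function.update x j y with hx'def
    set D := dist (x j) y with hDdef
    have hD : 0 ≤ D := dist_nonneg
    have hdist : ∀ p : Fin (n+k), |g (x p) - g (x' p)| ≤ Lf * D * (if p = j then 1 else 0) := by
      intro p
      by_cases hp : p = j
      · subst hp
        rw [if_pos rfl, mul_one, hx'def, Function.update_self]
        exact hglip _ _
      · rw [hx'def, Function.update_of_ne hp, if_neg hp, mul_zero, sub_self, abs_zero]
    set u : Fin n → Fin (n+k) := fun i => ⟨(i:ℕ), by omega⟩ with hudef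
    set v : Fin n → Fin (n+k) := fun i => ⟨(i:ℕ)+k, by omega⟩ with hvdef
    have hterm : ∀ i : Fin n,
        |g (x (u i)) * g (x (v i)) - g (x' (u i)) * g (x' (v i))|
          ≤ Mf * |g (x (v i)) - g (x' (v i))| + Mf * |g (x (u i)) - g (x' (u i))| := by
      intro i
      have e : g (x (u i)) * g (x (v i)) - g (x' (u i)) * g (x' (v i))
          = g (x (u i)) * (g (x (v i)) - g (x' (v i)))
            + (g (x (u i)) - g (x' (u i))) * g (x' (v i)) := by ring
      rw [e]
      calc |g (x (u i)) * (g (x (v i)) - g (x' (v i)))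
            + (g (x (u i)) - g (x' (u i))) * g (x' (v i))|
          ≤ |g (x (u i))| * |g (x (v i)) - g (x' (v i))|
            + |g (x (u i)) - g (x' (u i))| * |g (x' (v i))| := by
            refine (abs_add_le _ _).trans ?_
            rw [abs_mul, abs_mul]
        _ ≤ Mf * |g (x (v i)) - g (x' (v i))| + Mf * |g (x (u i)) - g (x' (u i))| := by
            have h1 := hgbdd (x (u i))
            have h2 := hgbdd (x' (v i))
            have h3 := abs_nonneg (g (x (v i)) - g (x' (v i)))
            have h4 := abs_nonneg (g (x (u i)) - g (x' (u i)))
            nlinarith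
    have hu_inj : Function.Injective u := by
      intro i i' h
      have := congrArg Fin.val h
      simp only [hudef] at this
      exact Fin.ext this
    have hv_inj : Function.Injective v := by
      intro i i' h
      have := congrArg Fin.val h
      simp only [hvdef] at this
      exact Fin.ext (by omega)
    have hsum_u : ∑ i : Fin n, |g (x (u i)) - g (x' (u i))| ≤ Lf * D := by
      calc ∑ i : Fin n, |g (x (u i)) - g (x' (u i))|
          ≤ ∑ i : Fin n, Lf * D * (if u i = j then 1 else 0) :=
            Finset.sum_le_sum fun i _ => hdist (u i)
        _ = Lf * D * ∑ i : Fin n, (if u i = j then (1:ℝ) else 0) := by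
            rw [Finset.mul_sum]
        _ ≤ Lf * D * 1 := by
            apply mul_le_mul_of_nonneg_left (sum_ite_inj_le_one u hu_inj j) (by positivity)
        _ = Lf * D := mul_one _
    have hsum_v : ∑ i : Fin n, |g (x (v i)) - g (x' (v i))| ≤ Lf * D := by
      calc ∑ i : Fin n, |g (x (v i)) - g (x' (v i))|
          ≤ ∑ i : Fin n, Lf * D * (if v i = j then 1 else 0) :=
            Finset.sum_le_sum fun i _ => hdist (v i)
        _ = Lf * D * ∑ i : Fin n, (if v i = j then (1:ℝ) else 0) := by
            rw [Finset.mul_sum]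
        _ ≤ Lf * D * 1 := by
            apply mul_le_mul_of_nonneg_left (sum_ite_inj_le_one v hv_inj j) (by positivity)
        _ = Lf * D := mul_one _
    calc |K x - K x'|
        = (1/(n:ℝ)) * |∑ i : Fin n, (g (x (u i)) * g (x (v i)) - g (x' (u i)) * g (x' (v i)))| := by
          rw [hKdef]
          simp only []
          rw [← mul_sub, abs_mul, abs_of_nonneg (by positivity : (0:ℝ) ≤ 1/(n:ℝ)),
            Finset.sum_sub_distrib]
      _ ≤ (1/(n:ℝ)) * ∑ i : Fin n, |g (x (u i)) * g (x (v i)) - g (x' (u i)) * g (x' (v i))| := by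
          apply mul_le_mul_of_nonneg_left (Finset.abs_sum_le_sum_abs _ _) (by positivity)
      _ ≤ (1/(n:ℝ)) * ∑ i : Fin n,
            (Mf * |g (x (v i)) - g (x' (v i))| + Mf * |g (x (u i)) - g (x' (u i))|) := by
          apply mul_le_mul_of_nonneg_left (Finset.sum_le_sum fun i _ => hterm i) (by positivity)
      _ = (1/(n:ℝ)) * (Mf * ∑ i : Fin n, |g (x (v i)) - g (x' (v i))|
            + Mf * ∑ i : Fin n, |g (x (u i)) - g (x' (u i))|) := by
          rw [Finset.sum_add_distrib, Finset.mul_sum, Finset.mul_sum]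
      _ ≤ (1/(n:ℝ)) * (Mf * (Lf * D) + Mf * (Lf * D)) := by
          apply mul_le_mul_of_nonneg_left _ (by positivity)
          have h1 := mul_le_mul_of_nonneg_left hsum_v hMf
          have h2 := mul_le_mul_of_nonneg_left hsum_u hMf
          linarith
      _ = 2 * a / (n:ℝ) * D := by rw [hadef]; field_simp; ring
  -- Chernoff setup
  set EG : ℝ := ∫ z, G z ∂μ with hEGdef
  set S : ℝ := C * (((n:ℝ)+(k:ℝ)) * (2 * a / (n:ℝ))^2) with hSdef
  have hSpos : 0 < S := by
    rw [hSdef]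
    have : 0 < 2 * a / (n:ℝ) := by positivity
    positivity
  set lam : ℝ := t / (2 * S) with hlamdef
  have hlam : 0 < lam := by rw [hlamdef]; positivity
  have hEint : ∀ r c : ℝ, Integrable (fun x => Real.exp (r * G x - c)) μ := by
    intro r c
    apply Integrable.mono' (integrable_const (Real.exp (|r| * Mf^2 + |c|)))
    · exact (Real.measurable_exp.comp
        ((hGmeas.const_mul r).sub measurable_const)).aestronglyMeasurable
    · apply Filter.Eventually.of_forall
      intro x
      rw [Real.norm_eq_abs, abs_of_pos (Real.exp_pos _)]
      apply Real.exp_le_exp.2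
      have h1 : r * G x ≤ |r| * Mf^2 := by
        calc r * G x ≤ |r * G x| := le_abs_self _
          _ = |r| * |G x| := abs_mul _ _
          _ ≤ |r| * Mf^2 := mul_le_mul_of_nonneg_left (hGbdd x) (abs_nonneg _)
      have h2 : -c ≤ |c| := neg_le_abs c
      linarith
  have chern : ∀ ε : ℝ, |ε| = 1 →
      (μ {x | t < ε * (G x - EG)}).toReal ≤ Real.exp (-(t^2/(4*S))) := by
    intro ε hε
    have hsep' : SepLip (fun x => (ε * lam) * K x) (fun _ => lam * (2 * a / (n:ℝ))) := by
      intro x j y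
      have h := hsep x j y
      calc |(ε * lam) * K x - (ε * lam) * K (Function.update x j y)|
          = |ε| * |lam| * |K x - K (Function.update x j y)| := by
            rw [← abs_mul, ← abs_mul, mul_sub]
        _ = lam * |K x - K (Function.update x j y)| := by
            rw [hε, abs_of_pos hlam, one_mul]
        _ ≤ lam * (2 * a / (n:ℝ) * dist (x j) y) :=
            mul_le_mul_of_nonneg_left h hlam.le
        _ = lam * (2 * a / (n:ℝ)) * dist (x j) y := by ring
    have hKey := hconc (n+k) (by omega) _ _ hsep'
    simp only [hKG] at hKey
    have hsum : C * ∑ _j : Fin (n+k), (lam * (2 * a / (n:ℝ)))^2 = lam^2 * S := by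
      rw [Finset.sum_const, Finset.card_univ, Fintype.card_fin, nsmul_eq_mul, hSdef]
      push_cast
      ring
    rw [hsum] at hKey
    have hEG' : ∫ z, ε * lam * G z ∂μ = ε * lam * EG := by
      rw [hEGdef, integral_const_mul]
    rw [hEG'] at hKey
    have hmark := markov_exp μ (fun x => ε * lam * G x - ε * lam * EG)
      ((hGmeas.const_mul _).sub measurable_const) (hEint (ε * lam) (ε * lam * EG)) (lam * t)
    have hset : {x | lam * t < ε * lam * G x - ε * lam * EG} = {x | t < ε * (G x - EG)} := by
      ext x
      simp only [Set.mem_setOf_eq]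
      rw [show ε * lam * G x - ε * lam * EG = lam * (ε * (G x - EG)) by ring]
      exact mul_lt_mul_iff_right₀ hlam
    rw [hset] at hmark
    have hfinal : (μ {x | t < ε * (G x - EG)}).toReal * Real.exp (lam * t)
        ≤ Real.exp (lam^2 * S) := le_trans hmark hKey
    have hexp : Real.exp (lam^2 * S) / Real.exp (lam * t) = Real.exp (-(t^2/(4*S))) := by
      rw [← Real.exp_sub]
      congr 1
      rw [hlamdef]
      field_simp
      ring
    rw [← hexp]
    rw [le_div_iff₀ (Real.exp_pos _)]
    exact hfinal
  -- identification of the mean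
  have hXm : MeasurableSet X := hX.isClosed.measurableSet
  have hXc0 : μ Xᶜ = 0 := by
    rw [measure_compl hXm (measure_ne_top μ X), hμX, measure_univ, tsub_self]
  have hXae : ∀ᵐ z ∂μ, z ∈ X := by
    rw [ae_iff]
    exact hXc0
  have hBf : ∫ z, f z * f (T^[k] z) ∂μ = EG := by
    have step1 : ∫ z, f z * f (T^[k] z) ∂μ = ∫ z, g z * g (T^[k] z) ∂μ := by
      apply integral_congr_ae
      filter_upwards [hXae] with z hz
      rw [hgX z hz, hgX _ (hTX.iterate k hz)]
    have hint_i : ∀ i : ℕ, Integrable (fun z => g (T^[i] z) * g (T^[i+k] z)) μ := by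
      intro i
      apply Integrable.mono' (integrable_const (Mf^2))
      · exact ((hgmeas.comp (hT.iterate i)).mul
          (hgmeas.comp (hT.iterate (i+k)))).aestronglyMeasurable
      · apply Filter.Eventually.of_forall
        intro z
        rw [Real.norm_eq_abs, abs_mul, sq]
        exact mul_le_mul (hgbdd _) (hgbdd _) (abs_nonneg _) hMf
    have step2 : EG = ∫ z, g z * g (T^[k] z) ∂μ := by
      rw [hEGdef, hGdef]
      simp only []
      rw [integral_const_mul, integral_finset_sum _ (fun i _ => hint_i i)]
      have hterm_eq : ∀ i ∈ Finset.range n,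
          ∫ z, g (T^[i] z) * g (T^[i+k] z) ∂μ = ∫ z, g z * g (T^[k] z) ∂μ := by
        intro i _
        have hrw : ∀ z, g (T^[i] z) * g (T^[i+k] z)
            = (fun w => g w * g (T^[k] w)) (T^[i] z) := by
          intro z
          simp only []
          congr 2
          rw [add_comm i k, Function.iterate_add_apply]
        calc ∫ z, g (T^[i] z) * g (T^[i+k] z) ∂μ
            = ∫ z, (fun w => g w * g (T^[k] w)) (T^[i] z) ∂μ := by
              apply integral_congr_ae
              exact Filter.Eventually.of_forall fun z => hrw z
          _ = ∫ z, g z * g (T^[k] z) ∂μ :=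
              integral_iterate' μ T hT hinv _ (hgmeas.mul (hgmeas.comp (hT.iterate k))) i
      rw [Finset.sum_congr rfl hterm_eq, Finset.sum_const, Finset.card_range, nsmul_eq_mul]
      field_simp
    rw [step1, step2]
  -- assembling the two tails
  set S1 : Set (EuclideanSpace ℝ (Fin d)) := {x | t < 1 * (G x - EG)} with hS1def
  set S2 : Set (EuclideanSpace ℝ (Fin d)) := {x | t < (-1) * (G x - EG)} with hS2def
  have hsub : {x | t < |(1 / (n : ℝ)) * ∑ i ∈ Finset.range n,
      f (T^[i] x) * f (T^[i + k] x) - ∫ z, f z * f (T^[k] z) ∂μ|} ⊆ (S1 ∪ S2) ∪ Xᶜ := by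
    intro x hx
    by_cases hxX : x ∈ X
    · left
      have horb : ∀ i : ℕ, T^[i] x ∈ X := fun i => hTX.iterate i hxX
      have hAG : (1/(n:ℝ)) * ∑ i ∈ Finset.range n, f (T^[i] x) * f (T^[i+k] x) = G x := by
        rw [hGdef]
        simp only []
        congr 1
        apply Finset.sum_congr rfl
        intro i _
        rw [hgX _ (horb i), hgX _ (horb (i+k))]
      have hx' : t < |G x - EG| := by
        rw [← hAG, ← hBf]
        exact hx
      rcases lt_abs.mp hx' with h | h
      · left
        rw [hS1def]
        simp only [Set.mem_setOf_eq, one_mul]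
        exact h
      · right
        rw [hS2def]
        simp only [Set.mem_setOf_eq, neg_one_mul]
        exact h
    · right; exact hxX
  have hmeastot : μ {x | t < |(1 / (n : ℝ)) * ∑ i ∈ Finset.range n,
      f (T^[i] x) * f (T^[i + k] x) - ∫ z, f z * f (T^[k] z) ∂μ|} ≤ μ S1 + μ S2 := by
    calc μ _ ≤ μ ((S1 ∪ S2) ∪ Xᶜ) := measure_mono hsub
      _ ≤ μ (S1 ∪ S2) + μ Xᶜ := measure_union_le _ _
      _ = μ (S1 ∪ S2) := by rw [hXc0, add_zero]
      _ ≤ μ S1 + μ S2 := measure_union_le _ _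
  have htoReal : (μ {x | t < |(1 / (n : ℝ)) * ∑ i ∈ Finset.range n,
      f (T^[i] x) * f (T^[i + k] x) - ∫ z, f z * f (T^[k] z) ∂μ|}).toReal
      ≤ (μ S1).toReal + (μ S2).toReal := by
    have h1 : μ S1 + μ S2 ≠ ⊤ :=
      ENNReal.add_ne_top.mpr ⟨measure_ne_top μ _, measure_ne_top μ _⟩
    calc (μ _).toReal ≤ (μ S1 + μ S2).toReal := ENNReal.toReal_mono h1 hmeastot
      _ = (μ S1).toReal + (μ S2).toReal :=
        ENNReal.toReal_add (measure_ne_top μ _) (measure_ne_top μ _)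
  have hc1 : (μ S1).toReal ≤ Real.exp (-(t^2/(4*S))) := chern 1 (by norm_num)
  have hc2 : (μ S2).toReal ≤ Real.exp (-(t^2/(4*S))) := chern (-1) (by norm_num)
  have hfinal_eq : -(t^2/(4*S)) = -(t ^ 2 / (16 * C * (Lf * Mf) ^ 2))
      * ((n : ℝ) ^ 2 / ((n : ℝ) + (k : ℝ))) := by
    rw [hSdef, ← hadef]
    have han : a ≠ 0 := ne_of_gt ha
    have hCn : C ≠ 0 := ne_of_gt hC
    have hnn : (n:ℝ) ≠ 0 := ne_of_gt hnpos
    have hmn : (n:ℝ) + (k:ℝ) ≠ 0 := ne_of_gt hmpos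
    field_simp
    ring
  calc (μ _).toReal ≤ (μ S1).toReal + (μ S2).toReal := htoReal
    _ ≤ Real.exp (-(t^2/(4*S))) + Real.exp (-(t^2/(4*S))) := add_le_add hc1 hc2
    _ = 2 * Real.exp (-(t^2/(4*S))) := by ring
    _ = 2 * Real.exp (-(t ^ 2 / (16 * C * (Lf * Mf) ^ 2))
        * ((n : ℝ) ^ 2 / ((n : ℝ) + (k : ℝ)))) := by rw [hfinal_eq]
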